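/- arXiv:2505.03389 — 7 statements merged into one kernel-verified Lean document; each statement's English description precedes it below -/
import Mathlib

section
/- Let G be a topological group, D a dense subgroup of G, and ρ : D → ℝ a group homomorphism into the multiplicative group of positive real numbers (i.e., ρ(d) > 0 for all d ∈ D and ρ(d₁d₂) = ρ(d₁)ρ(d₂)). Suppose there is an open neighborhood U of the identity in G such that ρ(d) = 1 for all d ∈ U ∩ D. Then ρ(d) = 1 for every d ∈ D that lies in the connected component of the identity of G. -/
/-- If `ρ` is a homomorphism from a dense subgroup `D` of a topological group `G` into the
multiplicative group of positive reals, which equals `1` on a neighbourhood of the identity,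
then `ρ` equals `1` on every element of `D` lying in the identity component of `G`. -/
theorem stmt_0 {G : Type*} [Group G] [TopologicalSpace G] [IsTopologicalGroup G]
    (D : Subgroup G) (hD : Dense (D : Set G))
    (ρ : D → ℝ) (hpos : ∀ d : D, 0 < ρ d)
    (hmul : ∀ d₁ d₂ : D, ρ (d₁ * d₂) = ρ d₁ * ρ d₂)
    (U : Set G) (hUopen : IsOpen U) (hUone : (1 : G) ∈ U)
    (hUtriv : ∀ d : D, (d : G) ∈ U → ρ d = 1) :
    ∀ d : D, (d : G) ∈ connectedComponent (1 : G) → ρ d = 1 := by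
  have hone : ρ 1 = 1 := by
    have h := hmul 1 1
    rw [mul_one] at h
    nlinarith [hpos 1]
  have hinv : ∀ d : D, ρ d⁻¹ = (ρ d)⁻¹ := by
    intro d
    have h := hmul d d⁻¹
    rw [mul_inv_cancel, hone] at h
    exact (inv_eq_of_mul_eq_one_right h.symm).symm
  -- the "kernel" subgroup of G
  let S : Subgroup G :=
    { carrier := {g | ∃ hd : g ∈ D, ρ ⟨g, hd⟩ = 1}
      one_mem' := ⟨D.one_mem, hone⟩
      mul_mem' := by
        rintro a b ⟨ha, hρa⟩ ⟨hb, hρb⟩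
        exact ⟨D.mul_mem ha hb, by
          have := hmul ⟨a, ha⟩ ⟨b, hb⟩
          simpa [hρa, hρb] using this⟩
      inv_mem' := by
        rintro a ⟨ha, hρa⟩
        exact ⟨D.inv_mem ha, by
          have := hinv ⟨a, ha⟩
          exact (by simpa [hρa] using this : ρ ⟨a, ha⟩⁻¹ = 1)⟩ }
  have hSU : U ⊆ closure (S : Set G) := by
    refine (hD.open_subset_closure_inter hUopen).trans (closure_mono ?_)
    rintro g ⟨hgU, hgD⟩
    exact ⟨hgD, hUtriv ⟨g, hgD⟩ hgU⟩
  set T := S.topologicalClosure with hT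
  have hTopen : IsOpen (T : Set G) := by
    exact T.isOpen_of_mem_nhds (Filter.mem_of_superset (hUopen.mem_nhds hUone) hSU)
  have hclopen : IsClopen (T : Set G) := ⟨S.isClosed_topologicalClosure, hTopen⟩
  have hconn : connectedComponent (1 : G) ⊆ (T : Set G) :=
    hclopen.connectedComponent_subset T.one_mem
  intro d hd
  have hdT : (d : G) ∈ closure (S : Set G) := hconn hd
  have hVopen : IsOpen {g : G | (d : G) * g⁻¹ ∈ U} :=
    hUopen.preimage (by continuity)
  have hdV : (d : G) ∈ {g : G | (d : G) * g⁻¹ ∈ U} := by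
    simp [hUone]
  obtain ⟨k, hkV, hkS⟩ := mem_closure_iff.mp hdT _ hVopen hdV
  obtain ⟨hkD, hρk⟩ := hkS
  set e : D := ⟨k, hkD⟩
  have hmem : ((d * e⁻¹ : D) : G) ∈ U := hkV
  have h1 : ρ (d * e⁻¹) = 1 := hUtriv _ hmem
  have h2 : ρ ((d * e⁻¹) * e) = ρ (d * e⁻¹) * ρ e := hmul _ _
  rw [inv_mul_cancel_right] at h2
  rw [h2, h1, hρk, mul_one]
end

section
/- Let G be a locally compact Hausdorff topological group acting continuously and properly on a locally compact Hausdorff topological space N, where proper means that the map G × N → N × N, (g, x) ↦ (g • x, x), is a proper map. Assume the action is cocompact: there is a compact set K ⊆ N such that for every x ∈ N there exists g ∈ G with g • x ∈ K. Let ρ : G → ℝ be a continuous group homomorphism into the multiplicative group of positive real numbers. Then there exists a continuous function f : N → ℝ with f(x) > 0 for all x ∈ N and f(g • x) = ρ(g) · f(x) for all g ∈ G and x ∈ N. -/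
open MeasureTheory Set Filter Topology ENNReal

/-- If a locally compact Hausdorff group `G` acts continuously, properly and cocompactly on a
locally compact Hausdorff space `N`, and `ρ : G → ℝ` is a continuous homomorphism into the
multiplicative group of positive reals, then there is a positive continuous `ρ`-equivariant
function `f : N → ℝ`. -/
theorem stmt_2 {G : Type*} [Group G] [TopologicalSpace G] [IsTopologicalGroup G]
    [LocallyCompactSpace G] [T2Space G]
    {N : Type*} [TopologicalSpace N] [LocallyCompactSpace N] [T2Space N]
    [MulAction G N] [ContinuousSMul G N]
    (hproper : IsProperMap (fun p : G × N => (p.1 • p.2, p.2)))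
    (hcocompact : ∃ K : Set N, IsCompact K ∧ ∀ x : N, ∃ g : G, g • x ∈ K)
    (ρ : G → ℝ) (hρcont : Continuous ρ) (hρpos : ∀ g : G, 0 < ρ g)
    (hρmul : ∀ g₁ g₂ : G, ρ (g₁ * g₂) = ρ g₁ * ρ g₂) :
    ∃ f : N → ℝ, Continuous f ∧ (∀ x : N, 0 < f x) ∧
      ∀ (g : G) (x : N), f (g • x) = ρ g * f x := by
  classical
  borelize G
  obtain ⟨K, hK, hKcocompact⟩ := hcocompact
  -- a bump function equal to 1 on K
  obtain ⟨φ, hφ1, -, hφsupp, hφ01⟩ :=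
    exists_continuous_one_zero_of_isCompact hK isClosed_empty (disjoint_empty K)
  have hφcont : Continuous (φ : N → ℝ) := φ.continuous
  have hφnonneg : ∀ y, 0 ≤ φ y := fun y => (hφ01 y).1
  have hφle1 : ∀ y, φ y ≤ 1 := fun y => (hφ01 y).2
  set S : Set N := tsupport (φ : N → ℝ) with hS
  have hScompact : IsCompact S := hφsupp
  set μ : Measure G := Measure.haar with hμ
  -- the integrand
  set F : N → G → ℝ := fun x g => ρ g * φ (g⁻¹ • x) with hF
  have hFcont : ∀ x, Continuous (fun g => F x g) := fun x =>
    hρcont.mul (hφcont.comp ((continuous_inv.smul continuous_const)))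
  -- compact "support sets" from properness
  have key : ∀ L : Set N, IsCompact L →
      IsCompact ((Prod.fst '' ((fun p : G × N => (p.1 • p.2, p.2)) ⁻¹' (S ×ˢ L)))⁻¹) := by
    intro L hL
    have := hproper.isCompact_preimage (hScompact.prod hL)
    exact (this.image continuous_fst).inv
  have hmem : ∀ (x : N) (L : Set N), x ∈ L → ∀ g : G, g⁻¹ • x ∈ S →
      g ∈ (Prod.fst '' ((fun p : G × N => (p.1 • p.2, p.2)) ⁻¹' (S ×ˢ L)))⁻¹ := by
    intro x L hx g hg
    refine Set.mem_inv.2 ⟨(g⁻¹, x), ?_, rfl⟩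
    exact ⟨hg, hx⟩
  -- compact support of the integrand
  have hFzero : ∀ (x : N) (L : Set N), x ∈ L → ∀ g : G,
      g ∉ (Prod.fst '' ((fun p : G × N => (p.1 • p.2, p.2)) ⁻¹' (S ×ˢ L)))⁻¹ → F x g = 0 := by
    intro x L hx g hg
    have : φ (g⁻¹ • x) = 0 := by
      by_contra h
      exact hg (hmem x L hx g (subset_tsupport _ h))
    simp [hF, this]
  have hFsupp : ∀ x : N, HasCompactSupport (F x) := by
    intro x
    exact HasCompactSupport.intro (key {x} isCompact_singleton)
      (fun g hg => hFzero x {x} rfl g hg)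
  have hFint : ∀ x : N, Integrable (F x) μ := fun x =>
    (hFcont x).integrable_of_hasCompactSupport (hFsupp x)
  refine ⟨fun x => ∫ g, F x g ∂μ, ?_, ?_, ?_⟩
  · -- continuity
    rw [continuous_iff_continuousAt]
    intro x₀
    obtain ⟨L, hLcomp, hLnhds⟩ := exists_compact_mem_nhds x₀
    have hx₀L : x₀ ∈ L := mem_of_mem_nhds hLnhds
    set D := (Prod.fst '' ((fun p : G × N => (p.1 • p.2, p.2)) ⁻¹' (S ×ˢ L)))⁻¹ with hD
    have hDcomp : IsCompact D := key L hLcomp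
    set C : ℝ := (μ D).toReal with hC
    have hCnonneg : 0 ≤ C := ENNReal.toReal_nonneg
    refine Metric.tendsto_nhds.2 fun ε' hε' => ?_
    set ε : ℝ := ε' / (C + 1) with hε
    have hεpos : 0 < ε := div_pos hε' (by linarith)
    -- jointly continuous integrand
    have hΨ : Continuous fun p : G × N => F p.2 p.1 := by
      simp only [hF]
      exact (hρcont.comp continuous_fst).mul
        (hφcont.comp (((continuous_inv.comp continuous_fst).smul continuous_snd)))
    have hW : IsOpen {p : G × N | ‖F p.2 p.1 - F x₀ p.1‖ < ε} := by
      have : Continuous fun p : G × N => ‖F p.2 p.1 - F x₀ p.1‖ :=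
        (hΨ.sub ((hFcont x₀).comp continuous_fst)).norm
      exact isOpen_lt this continuous_const
    have hsub : D ×ˢ ({x₀} : Set N) ⊆ {p : G × N | ‖F p.2 p.1 - F x₀ p.1‖ < ε} := by
      rintro ⟨g, x⟩ ⟨hg, hx⟩
      simp only [Set.mem_singleton_iff] at hx
      subst hx
      simpa using hεpos
    obtain ⟨u, v, hu, hv, hDu, hx₀v, huv⟩ :=
      generalized_tube_lemma hDcomp isCompact_singleton hW hsub
    have hvnhds : v ∈ 𝓝 x₀ := hv.mem_nhds (hx₀v rfl)
    filter_upwards [hLnhds, hvnhds] with x hxL hxv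
    have hboundint : Integrable (D.indicator fun _ => ε) μ :=
      (integrable_indicator_iff hDcomp.measurableSet).2
        (integrableOn_const hDcomp.measure_lt_top.ne)
    have hle : ∀ g : G, ‖F x g - F x₀ g‖ ≤ D.indicator (fun _ => ε) g := by
      intro g
      by_cases hg : g ∈ D
      · rw [Set.indicator_of_mem hg]
        have hm : (g, x) ∈ u ×ˢ v := ⟨hDu hg, hxv⟩
        exact le_of_lt (huv hm)
      · rw [Set.indicator_of_notMem hg, hFzero x L hxL g hg, hFzero x₀ L hx₀L g hg]
        simp
    have h1 : dist (∫ g, F x g ∂μ) (∫ g, F x₀ g ∂μ)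
        = ‖∫ g, (F x g - F x₀ g) ∂μ‖ := by
      rw [Real.dist_eq, integral_sub (hFint x) (hFint x₀)]
      rfl
    have h2 : ‖∫ g, (F x g - F x₀ g) ∂μ‖ ≤ ∫ g, D.indicator (fun _ => ε) g ∂μ :=
      norm_integral_le_of_norm_le hboundint (ae_of_all _ hle)
    have h3 : ∫ g, D.indicator (fun _ => ε) g ∂μ = C * ε := by
      rw [integral_indicator_const (ε : ℝ) hDcomp.measurableSet]
      simp [hC, smul_eq_mul, mul_comm, Measure.real]
    have h4 : C * ε < ε' := by
      rw [hε, mul_div_assoc'] at *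
      rw [div_lt_iff₀ (by linarith : (0:ℝ) < C + 1)]
      nlinarith
    calc dist (∫ g, F x g ∂μ) (∫ g, F x₀ g ∂μ) = ‖∫ g, (F x g - F x₀ g) ∂μ‖ := h1
      _ ≤ ∫ g, D.indicator (fun _ => ε) g ∂μ := h2
      _ = C * ε := h3
      _ < ε' := h4
  · -- positivity
    intro x
    have hnonneg : 0 ≤ F x := fun g => mul_nonneg (hρpos g).le (hφnonneg _)
    rw [MeasureTheory.integral_pos_iff_support_of_nonneg hnonneg (hFint x)]
    obtain ⟨h, hh⟩ := hKcocompact x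
    have hopen : IsOpen {g : G | φ (g⁻¹ • x) ≠ 0} :=
      isOpen_ne.preimage (hφcont.comp (continuous_inv.smul continuous_const))
    have hsub : {g : G | φ (g⁻¹ • x) ≠ 0} ⊆ Function.support (F x) := by
      intro g hg
      exact mul_ne_zero (hρpos g).ne' hg
    have hne : ({g : G | φ (g⁻¹ • x) ≠ 0}).Nonempty := by
      refine ⟨h⁻¹, ?_⟩
      simp only [Set.mem_setOf_eq, inv_inv]
      rw [hφ1 hh]
      norm_num
    calc (0:ℝ≥0∞) < μ {g : G | φ (g⁻¹ • x) ≠ 0} := hopen.measure_pos μ hne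
      _ ≤ μ (Function.support (F x)) := measure_mono hsub
  · -- equivariance
    intro h x
    have this2 : ∀ g : G, F (h • x) (h * g) = ρ h * F x g := by
      intro g
      simp only [hF, mul_inv_rev, hρmul, mul_smul, inv_smul_smul]
      ring
    show ∫ g, F (h • x) g ∂μ = ρ h * ∫ g, F x g ∂μ
    calc ∫ g, F (h • x) g ∂μ
        = ∫ g, F (h • x) (h * g) ∂μ := (integral_mul_left_eq_self (F (h • x)) h).symm
      _ = ∫ g, ρ h * F x g ∂μ := by simp only [this2]
      _ = ρ h * ∫ g, F x g ∂μ := MeasureTheory.integral_const_mul _ _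
end

section
/- Let G be a set of self-maps of ℂ, each of the form z ↦ a z + b with a, b ∈ ℂ and |a| = 1, which contains the identity, is closed under composition and under inversion, and whose elements pairwise commute. Assume G acts transitively on ℂ: for all z, w ∈ ℂ there is g ∈ G with g(z) = w. Then every element of G is a translation, i.e., of the form z ↦ z + b. -/
/-- A commuting family of orientation-preserving Euclidean isometries of `ℂ ≅ ℝ²` (maps
`z ↦ a z + b` with `|a| = 1`), closed under composition and inversion, containing the identity,
and acting transitively on `ℂ`, consists only of translations. -/
theorem stmt_5 (G : Set (ℂ → ℂ))
    (hform : ∀ g ∈ G, ∃ a b : ℂ, ‖a‖ = 1 ∧ ∀ z : ℂ, g z = a * z + b)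
    (hid : id ∈ G)
    (hcomp : ∀ g ∈ G, ∀ h ∈ G, g ∘ h ∈ G)
    (hinv : ∀ g ∈ G, ∃ g' ∈ G, (∀ z : ℂ, g' (g z) = z) ∧ (∀ z : ℂ, g (g' z) = z))
    (hcomm : ∀ g ∈ G, ∀ h ∈ G, ∀ z : ℂ, g (h z) = h (g z))
    (htrans : ∀ z w : ℂ, ∃ g ∈ G, g z = w) :
    ∀ g ∈ G, ∃ b : ℂ, ∀ z : ℂ, g z = z + b := by
  intro g hg
  obtain ⟨a, b, _, hfun⟩ := hform g hg
  by_cases ha : a = 1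
  · exact ⟨b, fun z => by simp [hfun z, ha]⟩
  · exfalso
    have hsub : (1 : ℂ) - a ≠ 0 := sub_ne_zero.mpr (Ne.symm ha)
    set p : ℂ := b / (1 - a) with hp
    have hfix : g p = p := by
      rw [hfun p, hp]
      field_simp
      ring
    obtain ⟨h, hh, hhp⟩ := htrans p (p + 1)
    have h2 : g (p + 1) = p + 1 := by
      rw [← hhp, hcomm g hg h hh, hfix]
    rw [hfun (p + 1)] at h2
    rw [hfun p] at hfix
    apply ha
    have : a * (p + 1) + b - (a * p + b) = (p + 1) - p := by rw [h2, hfix]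
    linear_combination this
end

section
/- Let G be a topological group, K a compact subgroup of G, and P an arbitrary subgroup of G. Suppose there is a compact set C ⊆ G such that every element g ∈ G can be written g = p·c·k with p ∈ P, c ∈ C, k ∈ K. Then: (i) there is a compact set C₁ ⊆ G such that every g ∈ G can be written g = p·c₁ with p ∈ P and c₁ ∈ C₁; and (ii) for every closed subgroup H of G containing P, there is a compact set C₂ ⊆ H such that every h ∈ H can be written h = p·c₂ with p ∈ P and c₂ ∈ C₂. -/
open Pointwise


/-- If `G = P·C·K` with `C` compact and `K` a compact subgroup, then `P` is cocompact in `G`,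
and `P` is cocompact in every closed subgroup `H` of `G` containing `P`. -/
theorem stmt_6 {G : Type*} [Group G] [TopologicalSpace G] [IsTopologicalGroup G]
    (K : Subgroup G) (hK : IsCompact (K : Set G))
    (P : Subgroup G)
    (C : Set G) (hC : IsCompact C)
    (hdecomp : ∀ g : G, ∃ p ∈ P, ∃ c ∈ C, ∃ k ∈ K, g = p * c * k) :
    (∃ C₁ : Set G, IsCompact C₁ ∧ ∀ g : G, ∃ p ∈ P, ∃ c ∈ C₁, g = p * c) ∧
      (∀ H : Subgroup G, IsClosed (H : Set G) → P ≤ H →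
        ∃ C₂ : Set G, C₂ ⊆ (H : Set G) ∧ IsCompact C₂ ∧
          ∀ h ∈ H, ∃ p ∈ P, ∃ c ∈ C₂, h = p * c) := by
  have hCK : IsCompact (C * (K : Set G)) := hC.mul hK
  have hcover : ∀ g : G, ∃ p ∈ P, ∃ c ∈ C * (K : Set G), g = p * c := by
    intro g
    obtain ⟨p, hp, c, hc, k, hk, rfl⟩ := hdecomp g
    exact ⟨p, hp, c * k, Set.mul_mem_mul hc hk, (mul_assoc _ _ _)⟩
  refine ⟨⟨C * (K : Set G), hCK, hcover⟩, ?_⟩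
  intro H hHcl hPH
  refine ⟨C * (K : Set G) ∩ (H : Set G), Set.inter_subset_right,
    hCK.inter_right hHcl, ?_⟩
  intro h hh
  obtain ⟨p, hp, c, hc, rfl⟩ := hcover h
  refine ⟨p, hp, c, ⟨hc, ?_⟩, rfl⟩
  have : (p⁻¹ : G) * (p * c) ∈ H := H.mul_mem (H.inv_mem (hPH hp)) hh
  simpa using this
end

section
/- Let E = EuclideanSpace ℝ (Fin q) and F = EuclideanSpace ℝ (Fin m) with q ≥ 1, m ≥ 1. Let g_E : E ≃ E and g_F : F ≃ F be linear automorphisms and λ, μ > 0 real numbers with ‖g_E(x)‖ = λ‖x‖ for all x ∈ E and ‖g_F(y)‖ = μ‖y‖ for all y ∈ F. Let b be a basis of E × F over ℝ, and let Λ be the ℤ-span of the basis vectors of b. If the product automorphism g := g_E × g_F of E × F maps Λ bijectively onto Λ, then λ^q · μ^m = 1. -/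
open Module

lemma aux_det_isometry {V : Type*} [NormedAddCommGroup V] [InnerProductSpace ℝ V]
    [FiniteDimensional ℝ V] (f : V →ₗ[ℝ] V) (hf : ∀ x, ‖f x‖ = ‖x‖)
    (hpos : 0 < Module.finrank ℝ V) :
    |LinearMap.det f| = 1 := by
  classical
  haveI : Nonempty (Fin (Module.finrank ℝ V)) := ⟨⟨0, hpos⟩⟩
  let u := stdOrthonormalBasis ℝ V
  let fi : V →ₗᵢ[ℝ] V := ⟨f, hf⟩
  have hv : Orthonormal ℝ (f ∘ u) := fi.orthonormal_comp_iff.mpr u.orthonormal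
  have hli := hv.linearIndependent
  have hcard : Fintype.card (Fin (finrank ℝ V)) = finrank ℝ V := by simp
  let B := basisOfLinearIndependentOfCardEqFinrank hli hcard
  have hB : ⇑B = f ∘ u := coe_basisOfLinearIndependentOfCardEqFinrank hli hcard
  have hvB : Orthonormal ℝ ⇑B := hB ▸ hv
  let ob := B.toOrthonormalBasis hvB
  have h1 : u.toBasis.det ⇑ob.toBasis = 1 ∨ u.toBasis.det ⇑ob.toBasis = -1 :=
    u.det_to_matrix_orthonormalBasis_real ob
  have h2 : ⇑ob.toBasis = f ∘ ⇑u.toBasis := by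
    simp [ob, hB, u]
  have h3 : u.toBasis.det (f ∘ ⇑u.toBasis) = LinearMap.det f * u.toBasis.det ⇑u.toBasis :=
    u.toBasis.det_comp f _
  rw [Basis.det_self, mul_one] at h3
  rw [h2, h3] at h1
  rcases h1 with h | h <;> rw [h] <;> norm_num

lemma aux_det_similarity {n : ℕ} (hn : 1 ≤ n)
    (g : EuclideanSpace ℝ (Fin n) ≃ₗ[ℝ] EuclideanSpace ℝ (Fin n))
    (lam : ℝ) (hlam : 0 < lam) (hg : ∀ x, ‖g x‖ = lam * ‖x‖) :
    |LinearMap.det (g : EuclideanSpace ℝ (Fin n) →ₗ[ℝ] EuclideanSpace ℝ (Fin n))| = lam ^ n := by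
  set f := (g : EuclideanSpace ℝ (Fin n) →ₗ[ℝ] EuclideanSpace ℝ (Fin n))
  set h := lam⁻¹ • f with hh
  have hfin : finrank ℝ (EuclideanSpace ℝ (Fin n)) = n := finrank_euclideanSpace_fin
  have hiso : ∀ x, ‖h x‖ = ‖x‖ := by
    intro x
    rw [hh]
    simp only [LinearMap.smul_apply, norm_smul, Real.norm_eq_abs,
      abs_of_pos (inv_pos.mpr hlam)]
    rw [show f x = g x from rfl, hg, ← mul_assoc, inv_mul_cancel₀ hlam.ne', one_mul]
  have hdh : |LinearMap.det h| = 1 := aux_det_isometry h hiso (by rw [hfin]; omega)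
  have hfh : f = lam • h := by
    rw [hh, smul_smul, mul_inv_cancel₀ hlam.ne', one_smul]
  rw [hfh, LinearMap.det_smul, hfin, abs_mul, abs_pow, abs_of_pos hlam, hdh, mul_one]

lemma aux_det_lattice {V : Type*} [AddCommGroup V] [Module ℝ V] {ι : Type*}
    [Fintype ι] [DecidableEq ι] (b : Basis ι ℝ V) (g : V ≃ₗ[ℝ] V)
    (hl : ∀ x : V, x ∈ Submodule.span ℤ (Set.range b) ↔
      g x ∈ Submodule.span ℤ (Set.range b)) :
    |LinearMap.det (g : V →ₗ[ℝ] V)| = 1 := by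
  classical
  have hmem : ∀ j i, b.repr (g (b j)) i ∈ Set.range (algebraMap ℤ ℝ) := fun j i =>
    (b.mem_span_iff_repr_mem ℤ _).mp
      ((hl (b j)).mp (Submodule.subset_span (Set.mem_range_self j))) i
  have hmem' : ∀ j i, b.repr (g.symm (b j)) i ∈ Set.range (algebraMap ℤ ℝ) := fun j i =>
    (b.mem_span_iff_repr_mem ℤ _).mp
      ((hl (g.symm (b j))).mpr (by
        rw [g.apply_symm_apply]
        exact Submodule.subset_span (Set.mem_range_self j))) i
  choose N hN using hmem
  choose N' hN' using hmem'
  set A : Matrix ι ι ℝ := LinearMap.toMatrix b b (g : V →ₗ[ℝ] V) with hA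
  set A' : Matrix ι ι ℝ := LinearMap.toMatrix b b (g.symm : V →ₗ[ℝ] V) with hA'
  have hAN : A = (Matrix.of fun i j => N j i).map (Int.cast : ℤ → ℝ) := by
    ext i j
    rw [hA, LinearMap.toMatrix_apply]
    exact (hN j i).symm
  have hAN' : A' = (Matrix.of fun i j => N' j i).map (Int.cast : ℤ → ℝ) := by
    ext i j
    rw [hA', LinearMap.toMatrix_apply]
    exact (hN' j i).symm
  have hmul : A * A' = 1 := by
    rw [hA, hA', ← LinearMap.toMatrix_comp b b b]
    have : (g : V →ₗ[ℝ] V) ∘ₗ (g.symm : V →ₗ[ℝ] V) = LinearMap.id := by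
      ext x; simp
    rw [this, LinearMap.toMatrix_id]
  have hdet : A.det * A'.det = 1 := by rw [← Matrix.det_mul, hmul, Matrix.det_one]
  have hcast : A.det = ((Matrix.of fun i j => N j i).det : ℝ) := by
    rw [hAN]
    exact ((Int.castRingHom ℝ).map_det _).symm
  have hcast' : A'.det = ((Matrix.of fun i j => N' j i).det : ℝ) := by
    rw [hAN']
    exact ((Int.castRingHom ℝ).map_det _).symm
  have hint : (Matrix.of fun i j => N j i).det * (Matrix.of fun i j => N' j i).det = 1 := by
    have := hdet
    rw [hcast, hcast'] at this
    exact_mod_cast this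
  have hunit : IsUnit (Matrix.of fun i j => N j i).det := IsUnit.of_mul_eq_one _ hint
  have hgd : |LinearMap.det (g : V →ₗ[ℝ] V)| = |A.det| := by
    rw [hA, LinearMap.det_toMatrix]
  rcases Int.isUnit_iff.mp hunit with h | h <;> rw [hgd, hcast, h] <;> norm_num

lemma aux_det_prod {q m : ℕ}
    (gE : EuclideanSpace ℝ (Fin q) ≃ₗ[ℝ] EuclideanSpace ℝ (Fin q))
    (gF : EuclideanSpace ℝ (Fin m) ≃ₗ[ℝ] EuclideanSpace ℝ (Fin m)) :
    LinearMap.det ((gE.prodCongr gF) :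
        (EuclideanSpace ℝ (Fin q) × EuclideanSpace ℝ (Fin m)) →ₗ[ℝ] _) =
      LinearMap.det (gE : EuclideanSpace ℝ (Fin q) →ₗ[ℝ] _) *
        LinearMap.det (gF : EuclideanSpace ℝ (Fin m) →ₗ[ℝ] _) := by
  classical
  let bE := (EuclideanSpace.basisFun (Fin q) ℝ).toBasis
  let bF := (EuclideanSpace.basisFun (Fin m) ℝ).toBasis
  have hco : ((gE.prodCongr gF) :
      (EuclideanSpace ℝ (Fin q) × EuclideanSpace ℝ (Fin m)) →ₗ[ℝ]
        (EuclideanSpace ℝ (Fin q) × EuclideanSpace ℝ (Fin m))) =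
      LinearMap.prodMap
        (gE : EuclideanSpace ℝ (Fin q) →ₗ[ℝ] EuclideanSpace ℝ (Fin q))
        (gF : EuclideanSpace ℝ (Fin m) →ₗ[ℝ] EuclideanSpace ℝ (Fin m)) := rfl
  rw [hco, ← LinearMap.det_toMatrix (bE.prod bF), LinearMap.toMatrix_prodMap,
    Matrix.det_fromBlocks_zero₂₁, LinearMap.det_toMatrix, LinearMap.det_toMatrix]

/-- If a product of linear similarities of ratios `λ` (on a `q`-dimensional Euclidean space) and
`μ` (on an `m`-dimensional Euclidean space) preserves the `ℤ`-lattice spanned by an `ℝ`-basis of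
the product space, then `λ^q · μ^m = 1`. -/
theorem stmt_8 (q m : ℕ) (hq : 1 ≤ q) (hm : 1 ≤ m)
    (gE : EuclideanSpace ℝ (Fin q) ≃ₗ[ℝ] EuclideanSpace ℝ (Fin q))
    (gF : EuclideanSpace ℝ (Fin m) ≃ₗ[ℝ] EuclideanSpace ℝ (Fin m))
    (lam mu : ℝ) (hlam : 0 < lam) (hmu : 0 < mu)
    (hgE : ∀ x : EuclideanSpace ℝ (Fin q), ‖gE x‖ = lam * ‖x‖)
    (hgF : ∀ y : EuclideanSpace ℝ (Fin m), ‖gF y‖ = mu * ‖y‖)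
    {ι : Type*}
    (b : Module.Basis ι ℝ (EuclideanSpace ℝ (Fin q) × EuclideanSpace ℝ (Fin m)))
    (hlattice : ∀ x : EuclideanSpace ℝ (Fin q) × EuclideanSpace ℝ (Fin m),
      x ∈ Submodule.span ℤ (Set.range b) ↔ (gE.prodCongr gF) x ∈ Submodule.span ℤ (Set.range b)) :
    lam ^ q * mu ^ m = 1 := by
  classical
  haveI := FiniteDimensional.fintypeBasisIndex b
  have h1 : |LinearMap.det ((gE.prodCongr gF) :
      (EuclideanSpace ℝ (Fin q) × EuclideanSpace ℝ (Fin m)) →ₗ[ℝ]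
        (EuclideanSpace ℝ (Fin q) × EuclideanSpace ℝ (Fin m)))| = 1 :=
    aux_det_lattice b (gE.prodCongr gF) hlattice
  rw [aux_det_prod gE gF, abs_mul,
    aux_det_similarity hq gE lam hlam hgE, aux_det_similarity hm gF mu hmu hgF] at h1
  exact h1
end

section
/- Let A be the 4 × 4 real matrix with blocks B = [[2, 1], [1, 1]] on the diagonal, i.e., A has entries A₀₀ = 2, A₀₁ = A₁₀ = 1, A₁₁ = 1, A₂₂ = 2, A₂₃ = A₃₂ = 1, A₃₃ = 1, and all other entries 0. Then det A = 1, and there exist a real number λ > 1 and subspaces E, F of ℝ⁴ (with the standard Euclidean norm) such that E ∩ F = {0}, E + F = ℝ⁴, dim E = dim F = 2, A maps E into E and F into F, ‖A v‖ = λ‖v‖ for every v ∈ E, and ‖A v‖ = λ⁻¹‖v‖ for every v ∈ F. -/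
set_option maxHeartbeats 1000000 in
/-- The block-diagonal matrix with blocks `[[2,1],[1,1]]` has determinant `1` and splits
`ℝ⁴ = E ⊕ F` into two 2-dimensional invariant subspaces on which it acts as a similarity of
ratio `λ > 1` and `λ⁻¹` respectively (for the standard Euclidean norm). -/
theorem stmt_14 (A : Matrix (Fin 4) (Fin 4) ℝ)
    (hA : A = !![2, 1, 0, 0; 1, 1, 0, 0; 0, 0, 2, 1; 0, 0, 1, 1]) :
    A.det = 1 ∧
    ∃ lam : ℝ, 1 < lam ∧
      ∃ E F : Submodule ℝ (EuclideanSpace ℝ (Fin 4)),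
        E ⊓ F = ⊥ ∧ E ⊔ F = ⊤ ∧
        Module.finrank ℝ E = 2 ∧ Module.finrank ℝ F = 2 ∧
        (∀ v ∈ E, Matrix.toEuclideanLin A v ∈ E) ∧
        (∀ v ∈ F, Matrix.toEuclideanLin A v ∈ F) ∧
        (∀ v ∈ E, ‖Matrix.toEuclideanLin A v‖ = lam * ‖v‖) ∧
        (∀ v ∈ F, ‖Matrix.toEuclideanLin A v‖ = lam⁻¹ * ‖v‖) := by
  refine ⟨by rw [hA]; simp [Matrix.det_succ_row_zero, Fin.sum_univ_succ]; norm_num [show Fin.succAbove (1 : Fin 4) 2 = 3 from rfl, Matrix.cons_val_three], ?_⟩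
  have hs : Real.sqrt 5 ^ 2 = 5 := Real.sq_sqrt (by norm_num)
  have hs0 : (0:ℝ) < Real.sqrt 5 := Real.sqrt_pos.mpr (by norm_num)
  set s := Real.sqrt 5 with hsdef
  set φ : ℝ := (1 + s) / 2 with hφdef
  have hφ : φ ^ 2 = φ + 1 := by rw [hφdef]; nlinarith [hs]
  have hφ0 : 0 < φ := by rw [hφdef]; nlinarith
  set lam : ℝ := φ + 1 with hlamdef
  have hlampos : 0 < lam := by positivity
  have hlam1 : 1 < lam := by rw [hlamdef]; nlinarith
  have hlam0 : lam ≠ 0 := ne_of_gt hlampos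
  -- the vectors
  set e1 : EuclideanSpace ℝ (Fin 4) := WithLp.toLp 2 ![φ, 1, 0, 0] with he1def
  set e2 : EuclideanSpace ℝ (Fin 4) := WithLp.toLp 2 ![0, 0, φ, 1] with he2def
  set f1 : EuclideanSpace ℝ (Fin 4) := WithLp.toLp 2 ![1, -φ, 0, 0] with hf1def
  set f2 : EuclideanSpace ℝ (Fin 4) := WithLp.toLp 2 ![0, 0, 1, -φ] with hf2def
  set E : Submodule ℝ (EuclideanSpace ℝ (Fin 4)) := Submodule.span ℝ (Set.range ![e1, e2]) with hEdef
  set F : Submodule ℝ (EuclideanSpace ℝ (Fin 4)) := Submodule.span ℝ (Set.range ![f1, f2]) with hFdef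
  clear_value s φ lam e1 e2 f1 f2 E F
  have happ : ∀ (v : EuclideanSpace ℝ (Fin 4)) (i : Fin 4),
      Matrix.toEuclideanLin A v i = A.mulVec v i := fun v i => rfl
  -- eigenvector computations
  have hAe1 : Matrix.toEuclideanLin A e1 = lam • e1 := by
    ext i
    rw [happ]
    fin_cases i <;>
      simp [hA, he1def, Matrix.mulVec, dotProduct, Fin.sum_univ_four, PiLp.smul_apply] <;>
      nlinarith [hφ]
  have hAe2 : Matrix.toEuclideanLin A e2 = lam • e2 := by
    ext i
    rw [happ]
    fin_cases i <;>
      simp [hA, he2def, Matrix.mulVec, dotProduct, Fin.sum_univ_four, PiLp.smul_apply] <;>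
      nlinarith [hφ]
  have hinv : lam⁻¹ = 2 - φ := by
    refine inv_eq_of_mul_eq_one_right ?_
    rw [hlamdef]; nlinarith [hφ]
  have hAf1 : Matrix.toEuclideanLin A f1 = lam⁻¹ • f1 := by
    ext i
    rw [happ, hinv]
    fin_cases i <;>
      simp [hA, hf1def, Matrix.mulVec, dotProduct, Fin.sum_univ_four, PiLp.smul_apply] <;>
      nlinarith [hφ]
  have hAf2 : Matrix.toEuclideanLin A f2 = lam⁻¹ • f2 := by
    ext i
    rw [happ, hinv]
    fin_cases i <;>
      simp [hA, hf2def, Matrix.mulVec, dotProduct, Fin.sum_univ_four, PiLp.smul_apply] <;>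
      nlinarith [hφ]
  -- A acts as lam on E
  have hEeig : ∀ v ∈ E, Matrix.toEuclideanLin A v = lam • v := by
    intro v hv
    rw [hEdef] at hv
    induction hv using Submodule.span_induction with
    | mem x hx =>
        rcases hx with ⟨i, rfl⟩
        fin_cases i
        · exact hAe1
        · exact hAe2
    | zero => simp
    | add x y hx hy ihx ihy => rw [map_add, ihx, ihy, smul_add]
    | smul c x hx ih => rw [map_smul, ih, smul_comm]
  have hFeig : ∀ v ∈ F, Matrix.toEuclideanLin A v = lam⁻¹ • v := by
    intro v hv
    rw [hFdef] at hv
    induction hv using Submodule.span_induction with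
    | mem x hx =>
        rcases hx with ⟨i, rfl⟩
        fin_cases i
        · exact hAf1
        · exact hAf2
    | zero => simp
    | add x y hx hy ihx ihy => rw [map_add, ihx, ihy, smul_add]
    | smul c x hx ih => rw [map_smul, ih, smul_comm]
  -- linear independence and ranks
  have hLIe : LinearIndependent ℝ ![e1, e2] := by
    rw [LinearIndependent.pair_iff]
    intro a b h
    have h1 := congrFun (congrArg WithLp.ofLp h) 1
    have h3 := congrFun (congrArg WithLp.ofLp h) 3
    simp [he1def, he2def] at h1 h3
    exact ⟨h1, h3⟩
  have hLIf : LinearIndependent ℝ ![f1, f2] := by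
    rw [LinearIndependent.pair_iff]
    intro a b h
    have h0 := congrFun (congrArg WithLp.ofLp h) 0
    have h2 := congrFun (congrArg WithLp.ofLp h) 2
    simp [hf1def, hf2def] at h0 h2
    exact ⟨h0, h2⟩
  have hE2 : Module.finrank ℝ E = 2 := by
    rw [hEdef, finrank_span_eq_card hLIe]; simp
  have hF2 : Module.finrank ℝ F = 2 := by
    rw [hFdef, finrank_span_eq_card hLIf]; simp
  -- membership of generators
  have he1E : e1 ∈ E := by rw [hEdef]; exact Submodule.subset_span ⟨0, rfl⟩
  have he2E : e2 ∈ E := by rw [hEdef]; exact Submodule.subset_span ⟨1, rfl⟩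
  have hf1F : f1 ∈ F := by rw [hFdef]; exact Submodule.subset_span ⟨0, rfl⟩
  have hf2F : f2 ∈ F := by rw [hFdef]; exact Submodule.subset_span ⟨1, rfl⟩
  have he1m : e1 ∈ E ⊔ F := Submodule.mem_sup_left he1E
  have he2m : e2 ∈ E ⊔ F := Submodule.mem_sup_left he2E
  have hf1m : f1 ∈ E ⊔ F := Submodule.mem_sup_right hf1F
  have hf2m : f2 ∈ E ⊔ F := Submodule.mem_sup_right hf2F
  have hd0 : φ ^ 2 + 1 ≠ 0 := by positivity
  -- sup is top
  have hsup : E ⊔ F = ⊤ := by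
    apply top_unique
    rw [← (PiLp.basisFun 2 ℝ (Fin 4)).span_eq, Submodule.span_le]
    rintro x ⟨i, rfl⟩
    fin_cases i
    · show (PiLp.basisFun 2 ℝ (Fin 4)) 0 ∈ E ⊔ F
      have : (PiLp.basisFun 2 ℝ (Fin 4)) 0 = (φ ^ 2 + 1)⁻¹ • (φ • e1 + f1) := by
        ext j
        fin_cases j <;>
          simp [PiLp.basisFun_apply, he1def, hf1def] <;> field_simp <;> ring
      rw [this]
      exact Submodule.smul_mem _ _ (Submodule.add_mem _ (Submodule.smul_mem _ _ he1m) hf1m)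
    · show (PiLp.basisFun 2 ℝ (Fin 4)) 1 ∈ E ⊔ F
      have : (PiLp.basisFun 2 ℝ (Fin 4)) 1 = (φ ^ 2 + 1)⁻¹ • (e1 - φ • f1) := by
        ext j
        fin_cases j <;>
          simp [PiLp.basisFun_apply, he1def, hf1def] <;> field_simp <;> ring
      rw [this]
      exact Submodule.smul_mem _ _ (Submodule.sub_mem _ he1m (Submodule.smul_mem _ _ hf1m))
    · show (PiLp.basisFun 2 ℝ (Fin 4)) 2 ∈ E ⊔ F
      have : (PiLp.basisFun 2 ℝ (Fin 4)) 2 = (φ ^ 2 + 1)⁻¹ • (φ • e2 + f2) := by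
        ext j
        fin_cases j <;>
          simp [PiLp.basisFun_apply, he2def, hf2def] <;> field_simp <;> ring
      rw [this]
      exact Submodule.smul_mem _ _ (Submodule.add_mem _ (Submodule.smul_mem _ _ he2m) hf2m)
    · show (PiLp.basisFun 2 ℝ (Fin 4)) 3 ∈ E ⊔ F
      have : (PiLp.basisFun 2 ℝ (Fin 4)) 3 = (φ ^ 2 + 1)⁻¹ • (e2 - φ • f2) := by
        ext j
        fin_cases j <;>
          simp [PiLp.basisFun_apply, he2def, hf2def] <;> field_simp <;> ring
      rw [this]
      exact Submodule.smul_mem _ _ (Submodule.sub_mem _ he2m (Submodule.smul_mem _ _ hf2m))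
  -- inf is bot
  have hinf : E ⊓ F = ⊥ := by
    have key := Submodule.finrank_sup_add_finrank_inf_eq E F
    rw [hsup, hE2, hF2, finrank_top] at key
    rw [finrank_euclideanSpace_fin] at key
    exact Submodule.finrank_eq_zero.mp (by omega)
  refine ⟨lam, hlam1, E, F, hinf, hsup, hE2, hF2, ?_, ?_, ?_, ?_⟩
  · intro v hv; rw [hEeig v hv]; exact E.smul_mem _ hv
  · intro v hv; rw [hFeig v hv]; exact F.smul_mem _ hv
  · intro v hv
    rw [hEeig v hv, norm_smul, Real.norm_eq_abs, abs_of_pos hlampos]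
  · intro v hv
    rw [hFeig v hv, norm_smul, Real.norm_eq_abs, abs_of_pos (by positivity)]
end

section
/- Let X be a metric space and H a subgroup of the group of bijective isometries of X acting cocompactly: there is a compact set K ⊆ X such that for every x ∈ X there exists h ∈ H with h(x) ∈ K. Suppose there exist a real number λ with 0 < λ < 1 and a bijection p : X → X satisfying d(p(x), p(y)) = λ·d(x, y) for all x, y ∈ X and p H p⁻¹ ⊆ H (i.e., for every h ∈ H the map x ↦ p(h(p⁻¹(x))) belongs to H). Then for every ε > 0 there exists a compact set K' ⊆ X of diameter at most ε such that for every x ∈ X there exists h ∈ H with h(x) ∈ K'. -/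
/-- If a group `H` of isometries of a metric space `X` acts cocompactly and is normalized by a
contracting similarity `p` of ratio `0 < λ < 1` (with `p H p⁻¹ ⊆ H`), then for every `ε > 0`
there is a compact set of diameter at most `ε` meeting every `H`-orbit. -/
theorem stmt_15 {X : Type*} [MetricSpace X] (H : Subgroup (X ≃ᵢ X))
    (hcocompact : ∃ K : Set X, IsCompact K ∧ ∀ x : X, ∃ h ∈ H, h x ∈ K)
    (lam : ℝ) (hlam0 : 0 < lam) (hlam1 : lam < 1) (p : X ≃ X)
    (hp : ∀ x y : X, dist (p x) (p y) = lam * dist x y)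
    (hnorm : ∀ h ∈ H, ∃ h' ∈ H, ∀ x : X, p (h (p.symm x)) = h' x) :
    ∀ ε : ℝ, 0 < ε → ∃ K' : Set X, IsCompact K' ∧ Metric.diam K' ≤ ε ∧
      ∀ x : X, ∃ h ∈ H, h x ∈ K' := by
  obtain ⟨K, hK, horb⟩ := hcocompact
  have hplip : LipschitzWith ⟨lam, hlam0.le⟩ p :=
    LipschitzWith.of_dist_le_mul fun x y => by rw [hp]; exact le_rfl
  -- one iteration step
  have step : ∀ K : Set X, IsCompact K → (∀ x : X, ∃ h ∈ H, h x ∈ K) →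
      IsCompact (p '' K) ∧ Metric.diam (p '' K) ≤ lam * Metric.diam K ∧
        (∀ x : X, ∃ h ∈ H, h x ∈ p '' K) := by
    intro K hK horb
    refine ⟨hK.image hplip.continuous, ?_, ?_⟩
    · apply Metric.diam_le_of_forall_dist_le
        (mul_nonneg hlam0.le Metric.diam_nonneg)
      rintro _ ⟨a, ha, rfl⟩ _ ⟨b, hb, rfl⟩
      rw [hp]
      exact mul_le_mul_of_nonneg_left (Metric.dist_le_diam_of_mem hK.isBounded ha hb) hlam0.le
    · intro x
      obtain ⟨h, hh, hmem⟩ := horb (p.symm x)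
      obtain ⟨h', hh', heq⟩ := hnorm h hh
      exact ⟨h', hh', by rw [← heq x]; exact ⟨_, hmem, rfl⟩⟩
  -- iterate
  have iter : ∀ n : ℕ, ∃ K' : Set X, IsCompact K' ∧
      Metric.diam K' ≤ lam ^ n * Metric.diam K ∧ ∀ x : X, ∃ h ∈ H, h x ∈ K' := by
    intro n
    induction n with
    | zero => exact ⟨K, hK, by simp, horb⟩
    | succ n ih =>
      obtain ⟨K', hK', hd, ho⟩ := ih
      obtain ⟨h1, h2, h3⟩ := step K' hK' ho
      refine ⟨p '' K', h1, ?_, h3⟩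
      calc Metric.diam (p '' K') ≤ lam * Metric.diam K' := h2
        _ ≤ lam * (lam ^ n * Metric.diam K) := by
            exact mul_le_mul_of_nonneg_left hd hlam0.le
        _ = lam ^ (n + 1) * Metric.diam K := by ring
  intro ε hε
  obtain ⟨n, hn⟩ := exists_pow_lt_of_lt_one (div_pos hε (by positivity : (0:ℝ) < Metric.diam K + 1)) hlam1
  obtain ⟨K', h1, h2, h3⟩ := iter n
  refine ⟨K', h1, ?_, h3⟩
  have hd0 : Metric.diam K ≤ Metric.diam K + 1 := by linarith
  calc Metric.diam K' ≤ lam ^ n * Metric.diam K := h2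
    _ ≤ (ε / (Metric.diam K + 1)) * (Metric.diam K + 1) := by
        apply mul_le_mul hn.le hd0 Metric.diam_nonneg (by positivity)
    _ = ε := by field_simp
end
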